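/- For real γ ≠ 0 and h > 0, the two coefficients a₀ = sinh((3/4)γh)/sinh(γh) and a₋₂ = sinh((1/4)γh)/sinh(γh) satisfy the reproduction property a₀·exp(γ(t₀ - t̄)) + a₋₂·exp(γ(t₁ - t̄)) = 1 and a₀·exp(-γ(t₀ - t̄)) + a₋₂·exp(-γ(t₁ - t̄)) = 1, where t₀, t₁ = t₀ + h are grid points and t̄ = t₀ + h/4 is the evaluation point. -/

import Mathlib

open Real

theorem nucc_even_mask_reproduces_exponentials
    (γ h t₀ : ℝ) (hγ : γ ≠ 0) (hh : 0 < h)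
    (t₁ : ℝ) (ht₁ : t₁ = t₀ + h) (tb : ℝ) (htb : tb = t₀ + h / 4)
    (a₀ a₂ : ℝ)
    (ha₀ : a₀ = Real.sinh ((3 / 4) * γ * h) / Real.sinh (γ * h))
    (ha₂ : a₂ = Real.sinh ((1 / 4) * γ * h) / Real.sinh (γ * h)) :
    a₀ * Real.exp (γ * (t₀ - tb)) + a₂ * Real.exp (γ * (t₁ - tb)) = 1 ∧
    a₀ * Real.exp (-γ * (t₀ - tb)) + a₂ * Real.exp (-γ * (t₁ - tb)) = 1 := by
  subst ht₁ htb ha₀ ha₂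
  have hS : Real.sinh (γ * h) ≠ 0 := Real.sinh_ne_zero.mpr (mul_ne_zero hγ hh.ne')
  have hx0 : γ * h * (1 / 4) ≠ 0 := mul_ne_zero (mul_ne_zero hγ hh.ne') (by norm_num)
  set x := γ * h / 4 with hx
  have h1 : γ * (t₀ - (t₀ + h / 4)) = -x := by rw [hx]; ring
  have h2 : γ * (t₀ + h - (t₀ + h / 4)) = 3 * x := by rw [hx]; ring
  have h3 : -γ * (t₀ - (t₀ + h / 4)) = x := by rw [hx]; ring
  have h4 : -γ * (t₀ + h - (t₀ + h / 4)) = -(3 * x) := by rw [hx]; ring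
  have h5 : (3 / 4 : ℝ) * γ * h = 3 * x := by rw [hx]; ring
  have h6 : (1 / 4 : ℝ) * γ * h = x := by rw [hx]; ring
  have h7 : γ * h = 4 * x := by rw [hx]; ring
  rw [h1, h2, h3, h4, h5, h6, h7] at *
  have hne := Real.exp_ne_zero x
  have h8 : Real.exp x ^ 8 ≠ 1 := by
    rw [← Real.exp_nat_mul]
    intro hcon
    have := Real.exp_injective (hcon.trans Real.exp_zero.symm)
    apply hγ
    push_cast at this
    rw [hx] at this
    nlinarith [hh]
  have hd : Real.exp x * Real.exp x * Real.exp x * Real.exp x *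
      (Real.exp x * Real.exp x * Real.exp x * Real.exp x) - 1 ≠ 0 :=
    sub_ne_zero.mpr (by
      rw [show Real.exp x * Real.exp x * Real.exp x * Real.exp x *
        (Real.exp x * Real.exp x * Real.exp x * Real.exp x) = Real.exp x ^ 8 by ring]
      exact h8)
  constructor <;>
  · rw [Real.sinh_eq, Real.sinh_eq, Real.sinh_eq]
    field_simp
    rw [show (3:ℝ) * x = x + x + x by ring, show x * (4:ℝ) = x + x + x + x by ring]
    simp only [Real.exp_add, Real.exp_neg]
    field_simp
    ring
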